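/- arXiv:1711.01106 — 3 statements merged into one kernel-verified Lean document; each statement's English description precedes it below -/
import Mathlib

section
/- Let K be an algebraically closed field, R = K[x_1,…,x_7], and let X be the (3×3)-matrix with rows (0, 0, x_1), (x_2, x_3, x_4), (x_5, x_6, x_7). Define q_1' = x_4²x_6²x_7 − 2x_3x_4x_6x_7² + x_3²x_7³ + x_1x_4x_6² − x_1x_3x_6x_7 − x_1x_3x_5 + x_1x_2x_6, q_2' = −x_3x_4x_6x_7 + x_3²x_7² − x_3x_4x_5 − x_1x_3x_6 + x_2x_4x_6, q_3' = −x_4²x_6x_7 − x_4x_6²x_7 + x_3x_4x_7² + x_3x_6x_7² − x_4²x_5 − x_1x_4x_6 − x_1x_6² + x_2x_4x_7 − x_3x_5x_7 + x_2x_6x_7 − x_1x_2, and q_4' = −x_4x_6x_7² + x_3x_7³ − x_4²x_6 + x_3x_4x_7 − x_4x_5x_7 − x_1x_6x_7 + x_2x_7² − x_1x_3 − x_1x_5 − x_3x_5 + x_2x_6. Then √(I_2(X)) = √((q_1', q_2', q_3', q_4')). -/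
set_option maxHeartbeats 4000000


/-- The ideal generated by the `t × t` minors of a matrix. -/
def minorsIdeal {R : Type*} [CommRing R] {m n : ℕ} (t : ℕ)
    (X : Matrix (Fin m) (Fin n) R) : Ideal R :=
  Ideal.span { d | ∃ (r : Fin t → Fin m) (c : Fin t → Fin n),
    Function.Injective r ∧ Function.Injective c ∧ d = (X.submatrix r c).det }

/-- The variables `x₁, …, x₇` of `K[x₁, …, x₇]`: `exX13 K i` is `x_{i+1}`. -/
noncomputable def exX13 (K : Type*) [Field K] (i : Fin 7) : MvPolynomial (Fin 7) K :=
  MvPolynomial.X i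

/-- The `(3 × 3)`-matrix with rows `(0, 0, x₁)`, `(x₂, x₃, x₄)`, `(x₅, x₆, x₇)`. -/
noncomputable def exampleMatrix13 (K : Type*) [Field K] :
    Matrix (Fin 3) (Fin 3) (MvPolynomial (Fin 7) K) :=
  !![0, 0, exX13 K 0;
     exX13 K 1, exX13 K 2, exX13 K 3;
     exX13 K 4, exX13 K 5, exX13 K 6]

lemma keyPt13 {K : Type*} [Field K] (a b c d e f g : K)
    (h1 : g*(c*g-d*f)^2 - a*f*(c*g-d*f) + a*(b*f-c*e) = 0)
    (h2 : c*g*(c*g-d*f) + d*(b*f-c*e) - a*c*f = 0)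
    (h3 : g*(d+f)*(c*g-d*f) + d*(b*g-d*e) + g*(b*f-c*e) - a*f*(d+f) - a*b = 0)
    (h4 : (g^2+d)*(c*g-d*f) + g*(b*g-d*e) + (b*f-c*e) - a*f*g - a*c - a*e = 0) :
    a*b = 0 ∧ a*c = 0 ∧ a*e = 0 ∧ a*f = 0 ∧ b*f-c*e = 0 ∧ b*g-d*e = 0 ∧ c*g-d*f = 0 := by
  by_cases ha : a = 0
  · subst ha
    by_cases hg : g = 0
    · subst hg
      have hdP : d*(b*f-c*e) = 0 := by linear_combination h2
      have hdQ : d*(d*e) = 0 := by linear_combination -h3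
      have hP : (b*f-c*e) = d*(d*f) := by linear_combination h4
      have hd3f : d*(d*(d*f)) = 0 := by linear_combination hdP - d*hP
      have hdf : d*f = 0 := by
        have h3' : (d*f)^3 = 0 := by linear_combination f^2*hd3f
        exact pow_eq_zero_iff (by norm_num) |>.mp h3'
      have hde : d*e = 0 := by
        have h2' : (d*e)^2 = 0 := by linear_combination e*hdQ
        exact pow_eq_zero_iff (by norm_num) |>.mp h2'
      refine ⟨by ring, by ring, by ring, by ring, ?_, ?_, ?_⟩
      · linear_combination hP + d*hdf
      · linear_combination -hde
      · linear_combination -hdf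
    · -- a = 0, g ≠ 0
      have hR : c*g-d*f = 0 := by
        have : g*(c*g-d*f)^2 = 0 := by linear_combination h1
        have h2' : (c*g-d*f)^2 = 0 := by
          rcases mul_eq_zero.mp this with h|h
          · exact absurd h hg
          · exact h
        exact pow_eq_zero_iff (by norm_num) |>.mp h2'
      have hdP : d*(b*f-c*e) = 0 := by linear_combination h2 - c*g*hR
      have hQd : (d - g^2)*(b*g-d*e) = 0 := by
        linear_combination h3 - g*h4 - g*(f-g^2)*hR
      have hgdQ : g*(d*(b*g-d*e)) = 0 := by
        linear_combination d*h4 - hdP - d*(g^2+d)*hR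
      have hdQ : d*(b*g-d*e) = 0 := (mul_eq_zero.mp hgdQ).resolve_left hg
      have hg2Q : g^2*(b*g-d*e) = 0 := by linear_combination hdQ - hQd
      have hQ : b*g-d*e = 0 := by
        rcases mul_eq_zero.mp hg2Q with h|h
        · exact absurd (pow_eq_zero_iff (by norm_num) |>.mp h) hg
        · exact h
      have hP : b*f-c*e = 0 := by linear_combination h4 - g*hQ - (g^2+d)*hR
      exact ⟨by ring, by ring, by ring, by ring, hP, hQ, hR⟩
  · -- a ≠ 0 : use certificates a^5 * m^4 ∈ (q1..q4)
    have ha5 : a^5 ≠ 0 := pow_ne_zero 5 ha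
    have hcert_b : a^5 * b^4 = 0 := by
      linear_combination (-b^2*c*d^4*e + b^3*d^4*f + b^3*d^5 + a*b*c*d^3*e^2 - a*b^2*d^3*e*f - a*b^2*d^4*e - a*b^2*c^2*d^2*g - a^2*c^2*d^2*e^2 + a^2*c^3*d^2*e + a^2*b*c*d^2*e*f + a^2*b*c*d^3*e + a^2*b*c^2*d*e*g - a^2*b*c^2*d^2*f - a^2*b*c^2*d^3 + a^2*b^2*d^2*e*g + a^2*b^2*d^3*f + a^2*b^2*d^4 + 3*a^2*b^2*c*d*e - 2*a^2*b^2*c*d^2*g - a^2*b^2*c^2*d - a^2*b^3*d*g^2 - 3*a^2*b^3*d*f - 2*a^2*b^3*d^2 + a^3*c*d^2*e^2 - a^3*c^3*e*g + a^3*c^4*g - a^3*b*d^2*e*f - a^3*b*d^3*e - a^3*b*c*d*e*g - a^3*b*c^3 + a^3*b^2*d*e + 2*a^3*b^2*c*g^2 + a^3*b^2*c*f + 2*a^3*b^2*c*d + a^3*b^3*g - a^4*c*d^2*e + a^4*c^2*e*g - a^4*c^2*d^2 + a^4*c^3*g + a^4*b*d^2*f + a^4*b*d^3 - a^4*b*c*f*g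 - a^4*b*c*d*g - 3*a^4*b*c^2 - a^4*b^2*f - 2*a^4*b^2*d) * h1 + (b^2*d^6*e + b^2*c*d^4*e*g - b^3*d^4*f*g - b^3*d^5*g - a*b*d^5*e^2 - a*b*c*d^3*e^2*g + a*b^2*d^3*e*f*g + a*b^2*d^4*e*g - a*b^2*c*d^3*f*g + a*b^2*c*d^3*e + a*b^2*c^2*d^2*g^2 - a*b^3*d^3*f + a^2*c*d^4*e^2 + a^2*c^2*d^2*e^2*g - a^2*c^2*d^4*e - a^2*c^3*d^2*e*g - a^2*b*c*d^2*e^2 - a^2*b*c*d^3*e*g - a^2*b*c^2*d*e*g^2 + a^2*b*c^2*d^2*f*g + a^2*b*c^2*d^3*g - a^2*b^2*d^2*e*g^2 + a^2*b^2*d^2*e*f - 2*a^2*b^2*d^3*f*g - 2*a^2*b^2*d^3*e - 3*a^2*b^2*c*d*e*g + 2*a^2*b^2*c*d^2*g^2 - a^2*b^2*c*d^2*f + a^2*b^2*c^2*d*g + a^2*b^3*d*g^3 + 3*a^2*b^3*d*f*g + 2*a^2*b^3*d^2*g - a^3*d^4*e^2 - a^3*c*d^2*e^2*g - a^3*c^2*d*e*f*g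 + a^3*c^2*d*e^2 + a^3*c^3*e*g^2 + a^3*c^3*d*f*g - a^3*c^3*d*e - a^3*c^4*g^2 + a^3*b*d^2*e*f*g + 2*a^3*b*d^3*e*g + a^3*b*c*d*e*g^2 + a^3*b*c*d^2*e + a^3*b*c^2*d*f + a^3*b*c^2*d^2 + a^3*b*c^3*g + a^3*b^2*d*f*g^2 + a^3*b^2*d*e*g - a^3*b^2*d^2*g^2 + a^3*b^2*d^2*f - 2*a^3*b^2*c*g^3 - a^3*b^2*c*f*g - 3*a^3*b^2*c*d*g - a^3*b^3*g^2 - a^3*b^3*d + a^4*d^4*e + a^4*c*d*e*f*g - a^4*c*d*e^2 - a^4*c*d^3*f - a^4*c^2*e*g^2 - a^4*c^2*e*f + a^4*c^2*d*f*g - 2*a^4*c^2*d*e + a^4*c^2*d^2*g - a^4*c^3*g^2 + a^4*c^3*f + a^4*c^3*d - a^4*b*d*f^2*g + a^4*b*d*e*f - a^4*b*d^2*f*g - a^4*b*d^2*e - a^4*b*d^3*g + a^4*b*c*f*g^2 + a^4*b*c*d*g^2 + 2*a^4*b*c*d^2 + 2*a^4*b*c^2*g + 2*a^4*b^2*f*g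 + 2*a^4*b^2*e - a^4*b^2*c + a^5*c*e*f + a^5*c*d*e + a^5*c^2*f + a^5*c^2*d - a^5*b*f^2 - a^5*b*d*f - a^5*b*c*g - a^5*b^2) * h2 + (-b^2*c*d^5*e + b^3*d^5*f + a*b*c*d^4*e^2 - a*b^2*d^4*e*f - a^2*c^2*d^3*e^2 + a^2*c^3*d^3*e + a^2*b*c*d^3*e*f - a^2*b*c^2*d^3*f + a^2*b^2*d^3*e*g + a^2*b^2*d^4*f + 3*a^2*b^2*c*d^2*e - a^2*b^2*c*d^3*g - a^2*b^3*d^2*g^2 - 3*a^2*b^3*d^2*f + a^3*c*d^3*e^2 - a^3*b*d^3*e*f - a^3*b*c*d^2*e*g - a^3*b*c^2*d*e - a^3*b*c^3*d + a^3*b^2*d^2*e + a^3*b^2*c*d*g^2 + a^3*b^2*c*d*f - a^3*b^3*d*g - a^4*c*d^3*e + a^4*c^3*e - a^4*c^4 + a^4*b*d^3*f + a^4*b*c*d*e - 2*a^4*b*c^2*d - 2*a^4*b^2*d*f - a^4*b^3 - a^5*c^2*e - a^5*c^3 + a^5*b*c*f) * h3 + (-a^2*b^2*d^4*e + a^2*b^3*d^3*g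 - 3*a^3*b^2*c*d*e + a^3*b^2*c^2*d + 3*a^3*b^3*d*f + a^4*c^2*d^2*e - a^4*b*c*d^2*f + a^4*b*c^3 - a^4*b^2*c*f + 2*a^4*b^2*c*d + a^5*b*c^2) * h4
    have hcert_c : a^5 * c^4 = 0 := by
      linear_combination (c*d^5*e*f - 2*c*d^6*e - b*d^5*f^2 - b*d^5*e*g + b*d^7 - b*c*d^4*e + 2*b*c*d^5*g + b^2*d^4*g^2 + b^2*d^4*f + a*c*d^4*e*g + a*c^2*d^3*f*g + 3*a*c^2*d^3*e - 2*a*c^2*d^4*g - a*b*d^4*e - 2*a*b*c*d^3*g^2 - 3*a*b*c*d^3*f - 2*a*b*c*d^4 - a*b*c^2*d^2*g + a*b^2*d^3*g + a^2*c*d^3*f*g + 2*a^2*c*d^3*e + a^2*c^2*d^2*f - a^2*c^2*d^3 + 3*a^2*c^3*d*g - a^2*b*d^3*f - 3*a^2*b*c*d^2*g - a^2*b*c^2*d + a^2*b^2*d^2 + a^3*c*d^2*f + 2*a^3*c^2*d*g + a^3*c^3 - 2*a^3*b*c*d + a^4*c^2) * h1 + (-d^7*e*f + 2*d^8*e - c*d^5*e*f*g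 + 2*c*d^6*e*g + b*d^5*f^2*g + b*d^5*e*g^2 + b*d^6*f*g - 2*b*d^7*g + b*c*d^4*e*g - 2*b*c*d^5*g^2 - b^2*d^4*g^3 - b^2*d^4*f*g - a*d^6*e*g + a*c*d^4*f^2*g - a*c*d^4*e*g^2 - a*c*d^4*e*f - 2*a*c*d^5*f*g - a*c*d^5*e - a*c^2*d^3*f*g^2 - 3*a*c^2*d^3*e*g + 2*a*c^2*d^4*g^2 - a*b*d^4*f*g^2 + a*b*d^4*f^2 + 2*a*b*d^4*e*g + a*b*d^5*g^2 + a*b*d^6 + 2*a*b*c*d^3*g^3 + 2*a*b*c*d^3*f*g + a*b*c*d^3*e + 2*a*b*c*d^4*g + a*b*c^2*d^2*g^2 - a*b^2*d^3*g^2 - a*b^2*d^3*f + a^2*d^4*f^2*g - a^2*d^5*e - a^2*c*d^3*f*g^2 + a^2*c*d^3*f^2 - 2*a^2*c*d^3*e*g - 2*a^2*c*d^4*f - a^2*c*d^5 + 2*a^2*c^2*d^2*f*g - 3*a^2*c^2*d^2*e + a^2*c^2*d^3*g - 3*a^2*c^3*d*g^2 - 2*a^2*b*d^3*f*g + a^2*b*d^3*e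 + a^2*b*d^4*g + 3*a^2*b*c*d^2*g^2 + 2*a^2*b*c*d^2*f + a^2*b*c^2*d*g - a^2*b^2*d^2*g + a^3*d^3*f^2 + a^3*c*d^2*f*g - 2*a^3*c*d^2*e - a^3*c^2*d*g^2 + 2*a^3*c^2*d*f + 2*a^3*c^2*d^2 - a^3*c^3*g + 2*a^3*b*c*d*g - a^3*b^2*d + a^4*c*d*f + a^4*b*c) * h2 + (c*d^6*e*f - 2*c*d^7*e - b*d^6*f^2 - b*d^6*e*g + b*d^7*f - b*c*d^5*e + b*c*d^6*g + b^2*d^5*g^2 + b^2*d^5*f + a*c*d^5*e*g + 3*a*c^2*d^4*e - a*b*d^5*e - a*b*c*d^4*g^2 - 3*a*b*c*d^4*f - a*b*c*d^5 + a^2*c*d^4*e + a^2*c^2*d^4 - a^3*c^3*d) * h3 + (b*d^7*e - b^2*d^6*g + a*b^2*d^5 - a^2*b*c*d^4 - a^3*c^3*d*g + a^3*b*c^2*d - a^4*c^3) * h4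
    have hcert_e : a^5 * e^4 = 0 := by
      linear_combination (-c*d^2*e^3*g^2 + b*d^2*e^2*f*g^2 + b*d^3*e^2*g^2 + a*c*e^3*g^3 - a*c*d*e^2*f*g^2 + a*c*d*e^3*g - a*b*e^2*f*g^3 - a*b*d*e^2*g^3 - a*b*d*e^2*f*g - 2*a*b*d^2*e^2*g + a^2*e^3*g^3 + a^2*d*e*f^3*g + a^2*d*e^2*f*g^2 - 2*a^2*d*e^3*g + a^2*d^2*e*f^2*g + a^2*d^2*e^2*g^2 - a^2*d^2*e^2*f - 2*a^2*d^3*e^2 - a^2*c*e^2*g^3 + a^2*c*e^2*f*g - 2*a^2*c*e^3 - a^2*c*d*e*f*g^2 + 2*a^2*c*d*e^2*g - a^2*b*f^3*g^2 - a^2*b*e*f^2*g + 3*a^2*b*e^2*g^2 + 2*a^2*b*e^2*f - a^2*b*d*f^2*g^2 + a^2*b*d*e*f*g + a^2*b*d*e^2 + 2*a^2*b*d^2*e*g + a^3*f^4*g + a^3*e*f^2*g^2 - 2*a^3*e^2*g^3 - 2*a^3*e^2*f*g - a^3*e^3 + a^3*d*f^3*g - 3*a^3*d*e*f^2 + a^3*d*e^2*g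 - a^3*d^2*e*g^2 - 4*a^3*d^2*e*f - a^3*c*f^2*g^2 - a^3*c*e*g^3 + 2*a^3*c*e*f*g - 4*a^3*c*e^2 + 4*a^3*c*d*e*g + a^3*b*f*g^3 + a^3*b*f^2*g + a^3*b*e*f + a^3*b*d*g^3 - 2*a^3*b*d*e - a^4*f^2*g^2 + a^4*e*g^3 - a^4*e*f*g - a^4*e^2 - a^4*d*f*g^2 + a^4*c*g^3 - 2*a^4*c*e - a^4*b*g^2) * h1 + (d^4*e^3*g^2 + c*d^2*e^3*g^3 - b*d^2*e^2*f*g^3 - b*d^3*e^2*g^3 - a*d^2*e^2*f^2*g^2 - a*d^2*e^3*g^3 - 2*a*d^3*e^3*g - a*c*e^3*g^4 + a*c*d*e^2*f*g^3 - a*c*d*e^3*g^2 + a*b*e^2*f*g^4 + a*b*d*e^2*g^4 + a*b*d*e^2*f*g^2 + 2*a*b*d^2*e^2*g^2 - a^2*d*e*f^3*g^2 - a^2*d*e^2*f*g^3 + 3*a^2*d*e^3*g^2 - 2*a^2*d^2*e*f^2*g^2 + 3*a^2*d^2*e^2*f*g + a^2*d^2*e^3 + 2*a^2*d^3*e^2*g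 + a^2*c*e^2*g^4 - a^2*c*e^2*f*g^2 + 2*a^2*c*e^3*g + a^2*c*d*e*f*g^3 - 2*a^2*c*d*e^2*g^2 + a^2*b*f^3*g^3 + a^2*b*e*f^2*g^2 - 3*a^2*b*e^2*g^3 - 2*a^2*b*e^2*f*g + a^2*b*d*f^2*g^3 - a^2*b*d*e*f*g^2 - a^2*b*d*e^2*g - 2*a^2*b*d^2*e*g^2 - a^3*e^2*f*g^2 + a^3*e^3*g - a^3*d*f^3*g^2 + 3*a^3*d*e*f^2*g - 2*a^3*d*e^2*f + a^3*d^2*e*g^3 + 4*a^3*d^2*e*f*g + a^3*c*f^2*g^3 + a^3*c*e*g^4 - 2*a^3*c*e*f*g^2 + 4*a^3*c*e^2*g - 4*a^3*c*d*e*g^2 - a^3*b*f*g^4 - a^3*b*f^2*g^2 - a^3*b*e*f*g - a^3*b*d*g^4 + 2*a^3*b*d*e*g + 2*a^4*e*f*g^2 + a^4*e*f^2 - a^4*e^2*g + a^4*d*f*g^3 - a^4*c*g^4 + 2*a^4*c*e*g + a^4*b*g^3) * h2 + (-c*d^3*e^3*g^2 + b*d^3*e^2*f*g^2 + a*c*d*e^3*g^3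 + 2*a*c*d^2*e^3*g - a*b*d*e^2*f*g^3 - 2*a*b*d^2*e^2*f*g + a^2*d*e^3*g^3 + a^2*d^2*e*f^3*g + a^2*d^2*e^2*f*g^2 - 2*a^2*d^2*e^3*g - 2*a^2*d^3*e^2*f - a^2*c*d*e^2*g^3 + a^2*c*d*e^2*f*g - 3*a^2*c*d*e^3 - a^2*b*e^2*g^4 - a^2*b*d*f^3*g^2 - a^2*b*d*e*f^2*g + 2*a^2*b*d*e^2*g^2 + 3*a^2*b*d*e^2*f + 2*a^2*b*d^2*e*f*g + a^3*d*f^4*g + a^3*d*e*f^2*g^2 - a^3*d*e^2*g^3 - 3*a^3*d*e^2*f*g - 2*a^3*d*e^3 - a^3*d^2*e*f*g^2 - 4*a^3*d^2*e*f^2 - a^3*c*f^3*g^2 - a^3*c*e*f*g^3 - a^3*c*e*f^2*g + 2*a^3*c*e^2*g^2 - a^3*c*e^2*f + 4*a^3*c*d*e*f*g + a^3*b*f^3*g + a^3*b*e*g^4 + a^3*b*e*f*g^2 + a^3*b*e*f^2 + a^3*b*d*f*g^3 - 2*a^3*b*d*e*f - a^4*e*f^2*g - a^4*e^2*g^2 -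 a^4*e^2*f - a^4*d*f^2*g^2 + a^4*c*f*g^3 - 2*a^4*c*e*f - a^4*b*f*g^2) * h3 + (-a^2*d^2*e^3*g^2 + 2*a^2*d^3*e^3 - a^2*c*e^3*g^3 + a^2*b*e^2*f*g^3 + a^2*b*d*e^2*g^3 - 2*a^2*b*d^2*e^2*g - a^3*d*e^2*f*g^2 + a^3*d*e^2*f^2 + a^3*d*e^3*g + a^3*d^2*e^2*g^2 + 4*a^3*d^2*e^2*f + 2*a^3*c*e^2*g^3 + 2*a^3*c*e^3 - 4*a^3*c*d*e^2*g - a^3*b*e*f*g^3 - a^3*b*e^2*g^2 - 2*a^3*b*e^2*f - a^3*b*d*e*g^3 + 2*a^3*b*d*e^2 + a^4*e*f^3 + a^4*e^2*f*g - a^4*e^3 + a^4*d*e*f*g^2 - a^4*c*e*g^3 + 2*a^4*c*e^2 + a^4*b*e*g^2) * h4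
    have hcert_f : a^5 * f^4 = 0 := by
      linear_combination (-2*d*e^2*f^2*g^2 + d^2*e*f^2*g^3 - d^2*e^2*g^4 - 2*d^2*e^2*f*g^2 - 2*d^2*e^3*g + d^3*e^2*g^2 - d^4*e*g^3 + 2*c*e^2*f*g^3 - c*d^2*e*g^4 + 2*b*e*f^2*g^3 - 2*b*e^2*g^4 - b*d*f^2*g^4 + b*d*e*g^5 + 2*b*d*e*f*g^3 + 2*b*d*e^2*g^2 + b*d^2*f*g^4 - b*d^2*e*g^3 + 2*b*d^3*g^4 - 2*a*e*f^3*g^2 + 2*a*e^2*f*g^3 - 2*a*e^2*f^2*g + 2*a*e^3*g^2 + a*d*e*f*g^4 + 2*a*d*e^2*g^3 - 2*a*d*e^2*f*g + a*d^2*e*g^4 + 5*a*d^2*e*f*g^2 + a*d^2*e^2*g + 3*a*d^3*e*g^2 + a*c*f^2*g^4 - a*c*e*g^5 + 3*a*c*e^2*g^2 - 2*a*c*d*f*g^4 + 2*a*c*d*e*g^3 - a*b*f*g^5 - 2*a*b*f^2*g^3 - 3*a*b*e*f*g^2 - 2*a*b*e^2*g - a*b*d*g^5 - 7*a*b*d*f*g^3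 - 8*a*b*d^2*g^3 + a^2*f^2*g^4 + 3*a^2*f^3*g^2 - a^2*e*f*g^3 + a^2*e*f^2*g + a^2*d*f*g^4 + 4*a^2*d*f^2*g^2 - a^2*d*e*g^3 + a^2*d*e*f*g + a^2*d^2*f*g^2 - 3*a^2*d^2*e*g - a^2*c*g^5 + a^2*c*f*g^3 - 5*a^2*c*e*g^2 + a^2*b*g^4 + 8*a^2*b*f*g^2 + a^2*b*e*g + 12*a^2*b*d*g^2 + a^3*f*g^3 - 5*a^3*f^2*g + a^3*e*g^2 - 4*a^3*d*f*g - a^3*d*e + 2*a^3*c*g^2 - 6*a^3*b*g - a^4*f) * h1 + (4*d*e^2*f^2*g^3 - 2*d*e^3*g^4 - d^2*e*f^2*g^4 + d^2*e^2*g^5 + 2*d^2*e^2*f*g^3 + 2*d^2*e^3*g^2 - d^3*e^2*g^3 + 2*d^4*e*g^4 - 2*c*e^2*f*g^4 + c*d^2*e*g^5 - 2*b*e*f^2*g^4 + 2*b*e^2*g^5 + b*d*f^2*g^5 - b*d*e*g^6 - 2*b*d*e*f*g^4 - 2*b*d*e^2*g^3 - b*d^2*f*g^5 + b*d^2*e*g^4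 - 2*b*d^3*g^5 + 2*a*e^2*f^2*g^2 + a*d*f^3*g^4 - 2*a*d*e*f*g^5 - 3*a*d*e*f^2*g^3 + a*d*e^2*g^4 + 2*a*d*e^2*f*g^2 - 2*a*d^2*f^2*g^4 - a*d^2*e*g^5 - 5*a*d^2*e*f*g^3 - a*d^2*e^2*g^2 - 7*a*d^3*e*g^3 - a*c*f^2*g^5 + a*c*e*g^6 - 3*a*c*e^2*g^3 + 2*a*c*d*f*g^5 - 2*a*c*d*e*g^4 + a*b*f*g^6 + 2*a*b*f^2*g^4 + 3*a*b*e*f*g^3 + 2*a*b*e^2*g^2 + a*b*d*g^6 + 7*a*b*d*f*g^4 + 8*a*b*d^2*g^4 - a^2*e*f*g^4 - a^2*e*f^2*g^2 - 3*a^2*e^2*g^3 - a^2*d*f*g^5 + a^2*d*e*g^4 - a^2*d*e*f*g^2 - a^2*d^2*f*g^3 + 9*a^2*d^2*e*g^2 + a^2*c*g^6 - a^2*c*f*g^4 + 5*a^2*c*e*g^3 - a^2*b*g^5 - 8*a^2*b*f*g^3 - a^2*b*e*g^2 - 12*a^2*b*d*g^3 - a^3*f*g^4 + 3*a^3*f^2*g^2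 - a^3*e*g^3 + 4*a^3*d*f*g^2 - 3*a^3*d*e*g - 2*a^3*c*g^3 + 6*a^3*b*g^2 + a^4*f*g + a^4*e) * h2 + (-2*d*e^3*f*g^3 - 2*d*e^4*g^2 - 2*d^2*e^2*f^2*g^2 - 2*d^2*e^3*f*g + d^3*e*f^2*g^3 - d^3*e^2*g^4 - d^4*e*f*g^3 + 2*c*e^3*g^4 - 2*c*e^4*g - c*d^3*e*g^4 + 2*b*e^3*g^3 + 2*b*e^3*f*g + 2*b*d*e*f^2*g^3 + 2*b*d*e^2*f*g^2 - b*d^2*f^2*g^4 + b*d^2*e*g^5 + 2*b*d^3*f*g^4 - 2*a*e^3*f*g^2 - 2*a*e^4*g - 2*a*d*e*f^3*g^2 + 2*a*d*e^2*f*g^3 - 2*a*d*e^2*f^2*g + 2*a*d*e^3*g^2 + a*d^2*e*f*g^4 + 2*a*d^2*e*f^2*g^2 + 2*a*d^2*e^2*g^3 + 2*a*d^2*e^2*f*g + 3*a*d^3*e*f*g^2 + 2*a*c*e*f^2*g^3 - 2*a*c*e^2*g^4 + 2*a*c*e^2*f*g^2 + 2*a*c*e^3*g + a*c*d*e^2*g^2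 + 4*a*c*d^2*e*g^3 - 2*a*b*e*f^2*g^2 - 2*a*b*e^2*g^3 - 4*a*b*e^2*f*g - a*b*d*f*g^5 - a*b*d*f^2*g^3 - 3*a*b*d*e*g^4 - 3*a*b*d*e*f*g^2 - 8*a*b*d^2*f*g^3 + 2*a^2*e^2*f*g^2 + 2*a^2*e^3*g + a^2*d*f^2*g^4 + 3*a^2*d*f^3*g^2 - a^2*d*e*f*g^3 + a^2*d*e*f^2*g + a^2*d^2*f^2*g^2 - 3*a^2*d^2*e*f*g - a^2*c*f*g^5 - 3*a^2*c*f^2*g^3 + a^2*c*e*g^4 - 2*a^2*c*e*f*g^2 - 2*a^2*c*e^2*g - 6*a^2*c*d*e*g^2 + a^2*b*f*g^4 + 2*a^2*b*f^2*g^2 + 3*a^2*b*e*g^3 + 4*a^2*b*e*f*g + 12*a^2*b*d*f*g^2 + a^3*f^2*g^3 - 2*a^3*e*f*g^2 - 3*a^3*e^2*g - 4*a^3*d*f^2*g + 2*a^3*c*f*g^2 + 3*a^3*c*e*g - 6*a^3*b*f*g - a^4*f^2) * h3 + (2*d*e^3*f^2*g^2 + 2*d^2*e^3*f*g^2 + 2*d^2*e^4*g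 + d^4*e^2*g^3 - 2*c*e^3*f*g^3 + 2*c*e^4*g^2 - 2*b*e^3*f*g^2 - 2*b*d*e^2*f*g^3 - 2*b*d*e^3*g^2 - b*d^3*e*g^4 + 2*a*e^3*f^2*g + 2*a*d*e^3*f*g - 2*a*d^2*e^2*f*g^2 - 2*a*d^2*e^3*g - 3*a*d^3*e^2*g^2 - 4*a*c*e^3*g^2 + 4*a*b*e^2*f*g^2 + 2*a*b*e^3*g + 2*a*b*d*e*f*g^3 + 2*a*b*d*e^2*g^2 + 4*a*b*d^2*e*g^3 - 2*a^2*e^2*f^2*g - 2*a^2*d*e^2*f*g - a^2*d^2*e*f*g^2 + 3*a^2*d^2*e^2*g + 3*a^2*c*e^2*g^2 - 3*a^2*b*e*f*g^2 - 2*a^2*b*e^2*g - 6*a^2*b*d*e*g^2 - a^3*f^3*g^2 + 3*a^3*e*f^2*g + 3*a^3*d*e*f*g - a^3*c*e*g^2 + 3*a^3*b*e*g) * h4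
    have hb : b = 0 := pow_eq_zero_iff (n := 4) (by norm_num) |>.mp
      ((mul_eq_zero.mp hcert_b).resolve_left ha5)
    have hc : c = 0 := pow_eq_zero_iff (n := 4) (by norm_num) |>.mp
      ((mul_eq_zero.mp hcert_c).resolve_left ha5)
    have he : e = 0 := pow_eq_zero_iff (n := 4) (by norm_num) |>.mp
      ((mul_eq_zero.mp hcert_e).resolve_left ha5)
    have hf : f = 0 := pow_eq_zero_iff (n := 4) (by norm_num) |>.mp
      ((mul_eq_zero.mp hcert_f).resolve_left ha5)
    subst hb; subst hc; subst he; subst hf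
    refine ⟨by ring, by ring, by ring, by ring, by ring, by ring, by ring⟩

/-- `√(I₂(X)) = √((q₁', q₂', q₃', q₄'))` for the explicit polynomials `qᵢ'` of the
example, where `x_j = exX13 K (j-1)`. -/
theorem stmt13 {K : Type*} [Field K] [IsAlgClosed K] :
    (minorsIdeal 2 (exampleMatrix13 K)).radical =
      (Ideal.span {
        -- q₁' = x₄²x₆²x₇ − 2x₃x₄x₆x₇² + x₃²x₇³ + x₁x₄x₆² − x₁x₃x₆x₇ − x₁x₃x₅ + x₁x₂x₆
        (exX13 K 3) ^ 2 * (exX13 K 5) ^ 2 * (exX13 K 6)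
          - 2 * (exX13 K 2) * (exX13 K 3) * (exX13 K 5) * (exX13 K 6) ^ 2
          + (exX13 K 2) ^ 2 * (exX13 K 6) ^ 3
          + (exX13 K 0) * (exX13 K 3) * (exX13 K 5) ^ 2
          - (exX13 K 0) * (exX13 K 2) * (exX13 K 5) * (exX13 K 6)
          - (exX13 K 0) * (exX13 K 2) * (exX13 K 4)
          + (exX13 K 0) * (exX13 K 1) * (exX13 K 5),
        -- q₂' = −x₃x₄x₆x₇ + x₃²x₇² − x₃x₄x₅ − x₁x₃x₆ + x₂x₄x₆
        - (exX13 K 2) * (exX13 K 3) * (exX13 K 5) * (exX13 K 6)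
          + (exX13 K 2) ^ 2 * (exX13 K 6) ^ 2
          - (exX13 K 2) * (exX13 K 3) * (exX13 K 4)
          - (exX13 K 0) * (exX13 K 2) * (exX13 K 5)
          + (exX13 K 1) * (exX13 K 3) * (exX13 K 5),
        -- q₃' = −x₄²x₆x₇ − x₄x₆²x₇ + x₃x₄x₇² + x₃x₆x₇² − x₄²x₅ − x₁x₄x₆ − x₁x₆²
        --        + x₂x₄x₇ − x₃x₅x₇ + x₂x₆x₇ − x₁x₂
        - (exX13 K 3) ^ 2 * (exX13 K 5) * (exX13 K 6)
          - (exX13 K 3) * (exX13 K 5) ^ 2 * (exX13 K 6)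
          + (exX13 K 2) * (exX13 K 3) * (exX13 K 6) ^ 2
          + (exX13 K 2) * (exX13 K 5) * (exX13 K 6) ^ 2
          - (exX13 K 3) ^ 2 * (exX13 K 4)
          - (exX13 K 0) * (exX13 K 3) * (exX13 K 5)
          - (exX13 K 0) * (exX13 K 5) ^ 2
          + (exX13 K 1) * (exX13 K 3) * (exX13 K 6)
          - (exX13 K 2) * (exX13 K 4) * (exX13 K 6)
          + (exX13 K 1) * (exX13 K 5) * (exX13 K 6)
          - (exX13 K 0) * (exX13 K 1),
        -- q₄' = −x₄x₆x₇² + x₃x₇³ − x₄²x₆ + x₃x₄x₇ − x₄x₅x₇ − x₁x₆x₇ + x₂x₇²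
        --        − x₁x₃ − x₁x₅ − x₃x₅ + x₂x₆
        - (exX13 K 3) * (exX13 K 5) * (exX13 K 6) ^ 2
          + (exX13 K 2) * (exX13 K 6) ^ 3
          - (exX13 K 3) ^ 2 * (exX13 K 5)
          + (exX13 K 2) * (exX13 K 3) * (exX13 K 6)
          - (exX13 K 3) * (exX13 K 4) * (exX13 K 6)
          - (exX13 K 0) * (exX13 K 5) * (exX13 K 6)
          + (exX13 K 1) * (exX13 K 6) ^ 2
          - (exX13 K 0) * (exX13 K 2)
          - (exX13 K 0) * (exX13 K 4)
          - (exX13 K 2) * (exX13 K 4)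
          + (exX13 K 1) * (exX13 K 5)} : Ideal (MvPolynomial (Fin 7) K)).radical := by
  rw [← MvPolynomial.vanishingIdeal_zeroLocus_eq_radical (K := K),
      ← MvPolynomial.vanishingIdeal_zeroLocus_eq_radical (K := K)]
  suffices h : MvPolynomial.zeroLocus K (minorsIdeal 2 (exampleMatrix13 K)) =
      MvPolynomial.zeroLocus K (Ideal.span _) by rw [h]
  unfold minorsIdeal
  rw [MvPolynomial.zeroLocus_span, MvPolynomial.zeroLocus_span]
  ext x
  simp only [Set.mem_setOf_eq]
  constructor
  · intro hx
    have t1 := hx _ ⟨![0,1], ![0,2], by decide, by decide, rfl⟩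
    have t2 := hx _ ⟨![0,1], ![1,2], by decide, by decide, rfl⟩
    have t3 := hx _ ⟨![0,2], ![0,2], by decide, by decide, rfl⟩
    have t4 := hx _ ⟨![0,2], ![1,2], by decide, by decide, rfl⟩
    have t5 := hx _ ⟨![1,2], ![0,1], by decide, by decide, rfl⟩
    have t6 := hx _ ⟨![1,2], ![0,2], by decide, by decide, rfl⟩
    have t7 := hx _ ⟨![1,2], ![1,2], by decide, by decide, rfl⟩
    simp only [Matrix.det_fin_two, Matrix.submatrix_apply, exampleMatrix13, exX13, Matrix.of_apply,
      Matrix.cons_val', Matrix.cons_val_zero, Matrix.cons_val_one, Matrix.head_cons,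
      Matrix.empty_val', Matrix.cons_val_fin_one, Matrix.head_fin_const,
      Matrix.cons_val_two, Matrix.tail_cons, map_sub, map_mul, map_add, map_pow, map_neg,
      MvPolynomial.eval_X, MvPolynomial.aeval_X, map_zero, MvPolynomial.eval_zero, zero_mul, mul_zero, zero_sub,
      neg_eq_zero, sub_eq_zero] at t1 t2 t3 t4 t5 t6 t7
    intro p hp
    simp only [Set.mem_insert_iff, Set.mem_singleton_iff] at hp
    rcases hp with rfl | rfl | rfl | rfl <;>
      simp only [exX13, map_sub, map_add, map_mul, map_pow, map_neg, map_ofNat,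
        MvPolynomial.eval_X, MvPolynomial.aeval_X, MvPolynomial.eval_ofNat] <;>
    · try linear_combination (x 6*(x 2*x 6 - x 3*x 5) - x 0*x 5)*t7 + x 0*t5
      try linear_combination (x 2*x 6)*t7 + x 3*t5 - x 5*t2
      try linear_combination (x 6*(x 3+x 5))*t7 + x 3*t6 + x 6*t5 - (x 3+x 5)*t4 - t1
      try linear_combination (x 6^2+x 3)*t7 + x 6*t6 + t5 - x 6*t4 - t2 - t3
  · intro hx
    have hq1 := hx _ (Set.mem_insert _ _)
    have hq2 := hx _ (Set.mem_insert_of_mem _ (Set.mem_insert _ _))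
    have hq3 := hx _ (Set.mem_insert_of_mem _ (Set.mem_insert_of_mem _ (Set.mem_insert _ _)))
    have hq4 := hx _ (Set.mem_insert_of_mem _ (Set.mem_insert_of_mem _
      (Set.mem_insert_of_mem _ (Set.mem_singleton _))))
    simp only [exX13, map_sub, map_add, map_mul, map_pow, map_neg, map_ofNat,
      MvPolynomial.eval_X, MvPolynomial.aeval_X, MvPolynomial.eval_ofNat] at hq1 hq2 hq3 hq4
    obtain ⟨M1, M2, M3, M4, M5, M6, M7⟩ :=
      keyPt13 (x 0) (x 1) (x 2) (x 3) (x 4) (x 5) (x 6)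
        (by linear_combination hq1) (by linear_combination hq2)
        (by linear_combination hq3) (by linear_combination hq4)
    rintro p ⟨r, c, hr, hc, rfl⟩
    have hr01 : r 0 ≠ r 1 := fun h => absurd (hr h) (by decide)
    have hc01 : c 0 ≠ c 1 := fun h => absurd (hc h) (by decide)
    rw [Matrix.det_fin_two]
    simp only [Matrix.submatrix_apply]
    obtain ⟨i0, hi0⟩ : ∃ v, r 0 = v := ⟨_, rfl⟩
    obtain ⟨i1, hi1⟩ : ∃ v, r 1 = v := ⟨_, rfl⟩
    obtain ⟨j0, hj0⟩ : ∃ v, c 0 = v := ⟨_, rfl⟩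
    obtain ⟨j1, hj1⟩ : ∃ v, c 1 = v := ⟨_, rfl⟩
    rw [hi0, hi1, hj0, hj1]
    rw [hi0, hi1] at hr01
    rw [hj0, hj1] at hc01
    clear hi0 hi1 hj0 hj1 hx hr hc hq1 hq2 hq3 hq4
    fin_cases i0 <;> fin_cases i1 <;> fin_cases j0 <;> fin_cases j1 <;>
      first
      | exact absurd rfl hr01
      | exact absurd rfl hc01
      | (simp only [exampleMatrix13, exX13, Fin.reduceFinMk, Fin.mk_zero, Fin.mk_one, Matrix.of_apply, Matrix.cons_val', Matrix.cons_val_zero,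
          Matrix.cons_val_one, Matrix.head_cons, Matrix.empty_val', Matrix.cons_val_fin_one,
          Matrix.head_fin_const, Matrix.cons_val_two, Matrix.tail_cons, map_sub, map_mul,
          MvPolynomial.eval_X, MvPolynomial.aeval_X, map_zero, Fin.isValue]
         first
         | ring1
         | linear_combination M1 | linear_combination -M1
         | linear_combination M2 | linear_combination -M2
         | linear_combination M3 | linear_combination -M3
         | linear_combination M4 | linear_combination -M4
         | linear_combination M5 | linear_combination -M5
         | linear_combination M6 | linear_combination -M6
         | linear_combination M7 | linear_combination -M7)
end

section
/- Let K be an algebraically closed field, R = K[x_1,…,x_6], and let X be the (2×4)-matrix with rows (0, x_1, x_2, x_3) and (x_4, 0, x_5, x_6). Define q_1' = x_1x_2x_6² − x_1x_3x_5x_6 − x_2²x_3x_6² + 2x_2x_3²x_5x_6 − x_3³x_5² − x_1x_4, q_2' = x_1x_5x_6 − x_2x_3x_5x_6 + x_3²x_5² − x_2x_4, and q_3' = x_1x_6² − x_2x_3x_6² + x_3²x_5x_6 − x_3x_4 + x_1x_5 − x_2²x_6 + x_2x_3x_5. Then √(I_2(X)) = √((q_1', q_2', q_3')). -/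
/-- The variables `x₁, …, x₆` of `K[x₁, …, x₆]`: `exX14 K i` is `x_{i+1}`. -/
noncomputable def exX14 (K : Type*) [Field K] (i : Fin 6) : MvPolynomial (Fin 6) K :=
  MvPolynomial.X i

/-- The `(2 × 4)`-matrix with rows `(0, x₁, x₂, x₃)` and `(x₄, 0, x₅, x₆)`. -/
noncomputable def exampleMatrix14 (K : Type*) [Field K] :
    Matrix (Fin 2) (Fin 4) (MvPolynomial (Fin 6) K) :=
  !![0, exX14 K 0, exX14 K 1, exX14 K 2;
     exX14 K 3, 0, exX14 K 4, exX14 K 5]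

/-- Pointwise key lemma: if the three polynomials `qᵢ'` vanish at a point, then all
`2 × 2` minors of the matrix vanish there. -/
lemma aux14 {K : Type*} [Field K] (a1 a2 a3 a4 a5 a6 : K)
    (h1 : a1*a2*a6^2 - a1*a3*a5*a6 - a2^2*a3*a6^2 + 2*a2*a3^2*a5*a6 - a3^3*a5^2 - a1*a4 = 0)
    (h2 : a1*a5*a6 - a2*a3*a5*a6 + a3^2*a5^2 - a2*a4 = 0)
    (h3 : a1*a6^2 - a2*a3*a6^2 + a3^2*a5*a6 - a3*a4 + a1*a5 - a2^2*a6 + a2*a3*a5 = 0) :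
    a1*a4 = 0 ∧ a2*a4 = 0 ∧ a3*a4 = 0 ∧ a1*a5 = 0 ∧ a1*a6 = 0 ∧ a2*a6 - a3*a5 = 0 := by
  by_cases h4 : a4 = 0
  · have h1' : (a2*a6 - a3*a5) * (a1*a6 - a2*a3*a6 + a3^2*a5) = 0 := by
      linear_combination h1 + a1*h4
    have h2' : a5 * (a1*a6 - a2*a3*a6 + a3^2*a5) = 0 := by linear_combination h2 + a2*h4
    have h3' : a6 * (a1*a6 - a2*a3*a6 + a3^2*a5) + a1*a5 - a2*(a2*a6 - a3*a5) = 0 := by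
      linear_combination h3 + a3*h4
    have hg : a1*a6 - a2*a3*a6 + a3^2*a5 = 0 := by
      by_contra hg
      have hf : a2*a6 - a3*a5 = 0 := (mul_eq_zero.mp h1').resolve_right hg
      have ha5 : a5 = 0 := (mul_eq_zero.mp h2').resolve_right hg
      have h6g : a6 * (a1*a6 - a2*a3*a6 + a3^2*a5) = 0 := by
        linear_combination h3' + a2*hf - a1*ha5
      have ha6 : a6 = 0 := (mul_eq_zero.mp h6g).resolve_right hg
      exact hg (by linear_combination (a1 - a2*a3)*ha6 + a3^2*ha5)
    have hf2 : (a2*a6 - a3*a5) * (a2*a6 - a3*a5) = 0 := by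
      linear_combination (a5 + a6^2)*hg - a6*h3'
    have hf : a2*a6 - a3*a5 = 0 := by rcases mul_eq_zero.mp hf2 with h | h <;> exact h
    exact ⟨by linear_combination a1*h4, by linear_combination a2*h4, by linear_combination a3*h4,
      by linear_combination h3' - a6*hg + a2*hf, by linear_combination hg + a3*hf, hf⟩
  · have R3 : a4 * (a2*(a2*a6 - a3*a5) - a1*a5) = 0 := by
      linear_combination a5*h1 - (a2*a6 - a3*a5)*h2
    have hA : a2*(a2*a6 - a3*a5) - a1*a5 = 0 := (mul_eq_zero.mp R3).resolve_left h4
    have R1 : a4*(a2*a6 - a3*a5) - a5*(a2*(a2*a6 - a3*a5) - a1*a5) = 0 := by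
      linear_combination a5*h3 - a6*h2
    have hf : a2*a6 - a3*a5 = 0 := by
      have h' : a4 * (a2*a6 - a3*a5) = 0 := by linear_combination R1 + a5*hA
      exact (mul_eq_zero.mp h').resolve_left h4
    have ha1 : a1 = 0 := by
      have h14 : a1 * a4 = 0 := by
        linear_combination (a1*a6 - a2*a3*a6 + a3^2*a5)*hf - h1
      exact (mul_eq_zero.mp h14).resolve_right h4
    have ha2 : a2 = 0 := by
      have h24 : a2 * a4 = 0 := by linear_combination a5*a6*ha1 - a3*a5*hf - h2
      exact (mul_eq_zero.mp h24).resolve_right h4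
    have ha3 : a3 = 0 := by
      have h34 : a3 * a4 = 0 := by linear_combination (a6^2 + a5)*ha1 - (a3*a6 + a2)*hf - h3
      exact (mul_eq_zero.mp h34).resolve_right h4
    exact ⟨by linear_combination a4*ha1, by linear_combination a4*ha2, by linear_combination a4*ha3,
      by linear_combination a5*ha1, by linear_combination a6*ha1, hf⟩

/-- `√(I₂(X)) = √((q₁', q₂', q₃'))` for the explicit polynomials `qᵢ'` of the example,
where `x_j = exX14 K (j-1)`. -/
theorem stmt14 {K : Type*} [Field K] [IsAlgClosed K] :
    (minorsIdeal 2 (exampleMatrix14 K)).radical =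
      (Ideal.span {
        -- q₁' = x₁x₂x₆² − x₁x₃x₅x₆ − x₂²x₃x₆² + 2x₂x₃²x₅x₆ − x₃³x₅² − x₁x₄
        (exX14 K 0) * (exX14 K 1) * (exX14 K 5) ^ 2
          - (exX14 K 0) * (exX14 K 2) * (exX14 K 4) * (exX14 K 5)
          - (exX14 K 1) ^ 2 * (exX14 K 2) * (exX14 K 5) ^ 2
          + 2 * (exX14 K 1) * (exX14 K 2) ^ 2 * (exX14 K 4) * (exX14 K 5)
          - (exX14 K 2) ^ 3 * (exX14 K 4) ^ 2
          - (exX14 K 0) * (exX14 K 3),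
        -- q₂' = x₁x₅x₆ − x₂x₃x₅x₆ + x₃²x₅² − x₂x₄
        (exX14 K 0) * (exX14 K 4) * (exX14 K 5)
          - (exX14 K 1) * (exX14 K 2) * (exX14 K 4) * (exX14 K 5)
          + (exX14 K 2) ^ 2 * (exX14 K 4) ^ 2
          - (exX14 K 1) * (exX14 K 3),
        -- q₃' = x₁x₆² − x₂x₃x₆² + x₃²x₅x₆ − x₃x₄ + x₁x₅ − x₂²x₆ + x₂x₃x₅
        (exX14 K 0) * (exX14 K 5) ^ 2
          - (exX14 K 1) * (exX14 K 2) * (exX14 K 5) ^ 2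
          + (exX14 K 2) ^ 2 * (exX14 K 4) * (exX14 K 5)
          - (exX14 K 2) * (exX14 K 3)
          + (exX14 K 0) * (exX14 K 4)
          - (exX14 K 1) ^ 2 * (exX14 K 5)
          + (exX14 K 1) * (exX14 K 2) * (exX14 K 4)} :
        Ideal (MvPolynomial (Fin 6) K)).radical := by
  rw [← MvPolynomial.vanishingIdeal_zeroLocus_eq_radical (K := K),
    ← MvPolynomial.vanishingIdeal_zeroLocus_eq_radical (K := K)]
  congr 1
  ext x
  simp only [MvPolynomial.mem_zeroLocus_iff, MvPolynomial.aeval_eq_eval]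
  constructor
  · -- zeroLocus of minors ⊆ zeroLocus of the qᵢ'
    intro hx
    have m1 : x 0 * x 3 = 0 := by
      have h := hx _ (Ideal.subset_span ⟨![0,1], ![1,0], by decide, by decide, rfl⟩)
      simp only [exampleMatrix14, exX14, Matrix.det_fin_two, Matrix.submatrix_apply,
        Matrix.cons_val', Matrix.cons_val_zero, Matrix.cons_val_one, Matrix.cons_val_two,
        Matrix.cons_val_three, Matrix.head_cons, Matrix.tail_cons, Matrix.head_fin_const,
        Matrix.empty_val', Matrix.cons_val_fin_one, Matrix.of_apply, map_sub, map_mul, map_zero,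
        MvPolynomial.eval_X] at h
      linear_combination h
    have m2 : x 1 * x 3 = 0 := by
      have h := hx _ (Ideal.subset_span ⟨![0,1], ![2,0], by decide, by decide, rfl⟩)
      simp only [exampleMatrix14, exX14, Matrix.det_fin_two, Matrix.submatrix_apply,
        Matrix.cons_val', Matrix.cons_val_zero, Matrix.cons_val_one, Matrix.cons_val_two,
        Matrix.cons_val_three, Matrix.head_cons, Matrix.tail_cons, Matrix.head_fin_const,
        Matrix.empty_val', Matrix.cons_val_fin_one, Matrix.of_apply, map_sub, map_mul, map_zero,
        MvPolynomial.eval_X] at h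
      linear_combination h
    have m3 : x 2 * x 3 = 0 := by
      have h := hx _ (Ideal.subset_span ⟨![0,1], ![3,0], by decide, by decide, rfl⟩)
      simp only [exampleMatrix14, exX14, Matrix.det_fin_two, Matrix.submatrix_apply,
        Matrix.cons_val', Matrix.cons_val_zero, Matrix.cons_val_one, Matrix.cons_val_two,
        Matrix.cons_val_three, Matrix.head_cons, Matrix.tail_cons, Matrix.head_fin_const,
        Matrix.empty_val', Matrix.cons_val_fin_one, Matrix.of_apply, map_sub, map_mul, map_zero,
        MvPolynomial.eval_X] at h
      linear_combination h
    have m4 : x 0 * x 4 = 0 := by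
      have h := hx _ (Ideal.subset_span ⟨![0,1], ![1,2], by decide, by decide, rfl⟩)
      simp only [exampleMatrix14, exX14, Matrix.det_fin_two, Matrix.submatrix_apply,
        Matrix.cons_val', Matrix.cons_val_zero, Matrix.cons_val_one, Matrix.cons_val_two,
        Matrix.cons_val_three, Matrix.head_cons, Matrix.tail_cons, Matrix.head_fin_const,
        Matrix.empty_val', Matrix.cons_val_fin_one, Matrix.of_apply, map_sub, map_mul, map_zero,
        MvPolynomial.eval_X] at h
      linear_combination h
    have m5 : x 0 * x 5 = 0 := by
      have h := hx _ (Ideal.subset_span ⟨![0,1], ![1,3], by decide, by decide, rfl⟩)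
      simp only [exampleMatrix14, exX14, Matrix.det_fin_two, Matrix.submatrix_apply,
        Matrix.cons_val', Matrix.cons_val_zero, Matrix.cons_val_one, Matrix.cons_val_two,
        Matrix.cons_val_three, Matrix.head_cons, Matrix.tail_cons, Matrix.head_fin_const,
        Matrix.empty_val', Matrix.cons_val_fin_one, Matrix.of_apply, map_sub, map_mul, map_zero,
        MvPolynomial.eval_X] at h
      linear_combination h
    have m6 : x 1 * x 5 - x 2 * x 4 = 0 := by
      have h := hx _ (Ideal.subset_span ⟨![0,1], ![2,3], by decide, by decide, rfl⟩)
      simp only [exampleMatrix14, exX14, Matrix.det_fin_two, Matrix.submatrix_apply,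
        Matrix.cons_val', Matrix.cons_val_zero, Matrix.cons_val_one, Matrix.cons_val_two,
        Matrix.cons_val_three, Matrix.head_cons, Matrix.tail_cons, Matrix.head_fin_const,
        Matrix.empty_val', Matrix.cons_val_fin_one, Matrix.of_apply, map_sub, map_mul, map_zero,
        MvPolynomial.eval_X] at h
      linear_combination h
    intro p hp
    refine RingHom.mem_ker.mp (Ideal.span_le.mpr ?_ hp)
    rintro q hq
    simp only [Set.mem_insert_iff, Set.mem_singleton_iff] at hq
    simp only [SetLike.mem_coe, RingHom.mem_ker]
    rcases hq with rfl | rfl | rfl <;>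
      simp only [exX14, map_add, map_sub, map_mul, map_pow, map_ofNat,
        MvPolynomial.eval_X]
    · linear_combination (x 0 * x 5 - x 1 * x 2 * x 5 + x 2 ^ 2 * x 4) * m6 - m1
    · linear_combination x 4 * m5 - x 2 * x 4 * m6 - m2
    · linear_combination x 5 * m5 - x 2 * x 5 * m6 - m3 + m4 - x 1 * m6
  · -- zeroLocus of the qᵢ' ⊆ zeroLocus of minors
    intro hx
    have e1 := hx _ (Ideal.subset_span (Set.mem_insert _ _))
    have e2 := hx _ (Ideal.subset_span (Set.mem_insert_of_mem _ (Set.mem_insert _ _)))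
    have e3 := hx _ (Ideal.subset_span (Set.mem_insert_of_mem _ (Set.mem_insert_of_mem _ rfl)))
    simp only [exX14, map_add, map_sub, map_mul, map_pow, map_ofNat,
      MvPolynomial.eval_X] at e1 e2 e3
    obtain ⟨m1, m2, m3, m4, m5, m6⟩ :=
      aux14 (x 0) (x 1) (x 2) (x 3) (x 4) (x 5)
        (by linear_combination e1) (by linear_combination e2) (by linear_combination e3)
    intro p hp
    have hle : minorsIdeal 2 (exampleMatrix14 K) ≤ RingHom.ker (MvPolynomial.eval x) := by
      rw [minorsIdeal, Ideal.span_le]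
      rintro d ⟨r, c, hr, hc, rfl⟩
      simp only [SetLike.mem_coe, RingHom.mem_ker]
      have hr2 : ∀ i : Fin 2, i = 0 ∨ i = 1 := by decide
      have hc4 : ∀ j : Fin 4, j = 0 ∨ j = 1 ∨ j = 2 ∨ j = 3 := by decide
      rcases hr2 (r 0) with h0 | h0 <;> rcases hr2 (r 1) with h1 | h1 <;>
        rcases hc4 (c 0) with g0 | g0 | g0 | g0 <;> rcases hc4 (c 1) with g1 | g1 | g1 | g1 <;>
        first
          | exact absurd (hr (h0.trans h1.symm)) (by decide)
          | exact absurd (hc (g0.trans g1.symm)) (by decide)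
          | (simp only [exampleMatrix14, exX14, Matrix.det_fin_two, Matrix.submatrix_apply,
              h0, h1, g0, g1,
              Matrix.cons_val', Matrix.cons_val_zero, Matrix.cons_val_one, Matrix.cons_val_two,
              Matrix.cons_val_three, Matrix.head_cons, Matrix.tail_cons, Matrix.head_fin_const,
              Matrix.empty_val', Matrix.cons_val_fin_one, Matrix.of_apply, map_sub, map_mul,
              map_zero, MvPolynomial.eval_X]
             first
              | linear_combination m1 | linear_combination -m1
              | linear_combination m2 | linear_combination -m2
              | linear_combination m3 | linear_combination -m3
              | linear_combination m4 | linear_combination -m4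
              | linear_combination m5 | linear_combination -m5
              | linear_combination m6 | linear_combination -m6)
    exact RingHom.mem_ker.mp (hle hp)
end

section
/- Let K be a field, let t be a positive integer, and let Y be a ((t+1)×(t+1))-matrix with entries in K such that every t×t minor of Y whose set of rows contains the first row of Y vanishes. If the first row of Y is nonzero, then the remaining t rows of Y are linearly dependent over K. -/
/-- Let `Y` be a `((t+1) × (t+1))`-matrix over a field `K` such that every `t × t` minor
of `Y` whose set of rows contains the first row of `Y` vanishes. If the first row of `Y`
is nonzero, then the remaining `t` rows of `Y` are linearly dependent over `K`. -/
theorem stmt17 {K : Type*} [Field K] {t : ℕ} (ht : 0 < t)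
    (Y : Matrix (Fin (t + 1)) (Fin (t + 1)) K)
    (hminor : ∀ (r : Fin t → Fin (t + 1)) (c : Fin t → Fin (t + 1)),
      Function.Injective r → Function.Injective c → (∃ i, r i = 0) →
      (Y.submatrix r c).det = 0)
    (h0 : Y 0 ≠ 0) :
    ¬ LinearIndependent K (fun i : Fin t => Y i.succ) := by
  intro hli
  -- Lemma A: any update of a nonzero row has vanishing determinant
  have hA : ∀ j : Fin (t+1), j ≠ 0 → ∀ u : Fin (t+1) → K,
      (Y.updateRow j u).det = 0 := by
    intro j hj u
    rw [Matrix.det_succ_row _ j]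
    apply Finset.sum_eq_zero
    intro c _
    have hsub : (Y.updateRow j u).submatrix j.succAbove c.succAbove
        = Y.submatrix j.succAbove c.succAbove := by
      ext a b
      simp [Matrix.submatrix_apply, Matrix.updateRow_ne (j.succAbove_ne a)]
    rw [hsub, hminor _ _ (Fin.succAbove_right_injective) (Fin.succAbove_right_injective)
      ⟨⟨0, ht⟩, by
        rw [Fin.succAbove_of_castSucc_lt]
        · rfl
        · exact lt_of_le_of_ne (Fin.zero_le j) (fun h => hj (Fin.ext (by simp [← h])))⟩,
      mul_zero]
  have hlast : (Fin.last t) ≠ 0 := by simp [Fin.ext_iff]; omega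
  have hdet : Y.det = 0 := by
    have := hA (Fin.last t) hlast (Y (Fin.last t))
    rwa [Matrix.updateRow_eq_self] at this
  obtain ⟨g, hg0, hg⟩ := Matrix.exists_vecMul_eq_zero_iff.mpr hdet
  have hgc : ∀ c, ∑ i, g i * Y i c = 0 := by
    intro c
    have := congrFun hg c
    simpa [Matrix.vecMul, dotProduct] using this
  have hli' := Fintype.linearIndependent_iff.mp hli
  -- g 0 ≠ 0
  have hgz : g 0 ≠ 0 := by
    intro h00
    apply hg0
    have : ∀ i : Fin t, g i.succ = 0 := by
      apply hli'
      ext c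
      have := hgc c
      rw [Fin.sum_univ_succ, h00, zero_mul, zero_add] at this
      simpa [Finset.sum_apply] using this
    ext i
    refine Fin.cases h00 (fun i => this i) i
  -- coefficients a with Y 0 = ∑ a i • v i
  set a : Fin t → K := fun i => - g i.succ / g 0 with ha
  have hY0 : ∀ c, Y 0 c = ∑ i, a i * Y i.succ c := by
    intro c
    have h1 := hgc c
    rw [Fin.sum_univ_succ] at h1
    have h2 : ∑ i, a i * Y i.succ c = (∑ i : Fin t, -(g i.succ) * Y i.succ c) / g 0 := by
      rw [Finset.sum_div]
      exact Finset.sum_congr rfl fun i _ => by rw [ha]; ring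
    have h3 : ∑ i : Fin t, -g i.succ * Y i.succ c = -∑ i : Fin t, g i.succ * Y i.succ c := by
      simp [neg_mul]
    rw [h2, h3, eq_div_iff hgz]
    linear_combination h1
  -- some coefficient is nonzero
  obtain ⟨m, ham⟩ : ∃ m, a m ≠ 0 := by
    by_contra hc
    push_neg at hc
    apply h0
    ext c
    rw [hY0 c]
    simp [hc]
  set W := Submodule.span K (Set.range fun i : Fin t => Y i.succ) with hWdef
  have hY0W : Y 0 ∈ W := by
    have : Y 0 = ∑ i : Fin t, a i • (Y i.succ) := by
      ext c
      simpa [Finset.sum_apply] using hY0 c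
    rw [this]
    exact Submodule.sum_mem _ fun i _ => Submodule.smul_mem _ _
      (Submodule.subset_span ⟨i, rfl⟩)
  -- a standard basis vector outside W
  obtain ⟨j, hj⟩ : ∃ j : Fin (t+1), Pi.single j 1 ∉ W := by
    by_contra hc
    push_neg at hc
    have htop : (⊤ : Submodule K (Fin (t+1) → K)) ≤ W := by
      rw [← (Pi.basisFun K (Fin (t+1))).span_eq]
      apply Submodule.span_le.mpr
      rintro x ⟨jj, rfl⟩
      simpa [Pi.basisFun_apply] using hc jj
    have h1 : Module.finrank K W = t := by
      rw [hWdef, finrank_span_eq_card hli]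
      simp
    have h2 : Module.finrank K W = t + 1 := by
      rw [top_le_iff.mp htop] at *
      simp [finrank_top, Module.finrank_fin_fun]
    omega
  -- the modified matrix
  set Z := Y.updateRow m.succ (Pi.single j 1) with hZdef
  have hdetZ : Z.det = 0 := hA m.succ (Fin.succ_ne_zero m) _
  obtain ⟨h, hh0, hh⟩ := Matrix.exists_vecMul_eq_zero_iff.mpr hdetZ
  have hhc : ∀ c, h 0 * Y 0 c + ∑ i : Fin t, h i.succ * Z i.succ c = 0 := by
    intro c
    have := congrFun hh c
    rw [show (0 : Fin (t+1) → K) c = 0 from rfl] at this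
    rw [Matrix.vecMul, dotProduct] at this  -- may need adjusting
    rw [Fin.sum_univ_succ] at this
    have hZ0 : Z 0 = Y 0 := Matrix.updateRow_ne (Ne.symm (Fin.succ_ne_zero m))
    rw [hZ0] at this
    exact this
  set b : Fin t → K := fun i => h 0 * a i + (if i = m then 0 else h i.succ) with hb
  have hfin : ∀ c, (∑ i : Fin t, b i * Y i.succ c) + h m.succ * (Pi.single j 1 : Fin (t+1) → K) c = 0 := by
    intro c
    have h1 := hhc c
    have hterm : ∀ i : Fin t, h i.succ * Z i.succ c =
        (if i = m then 0 else h i.succ) * Y i.succ c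
        + (if i = m then h m.succ * (Pi.single j 1 : Fin (t+1) → K) c else 0) := by
      intro i
      rcases eq_or_ne i m with rfl | hne
      · simp [hZdef, Matrix.updateRow_self]
      · have : i.succ ≠ m.succ := fun hcontra => hne (Fin.succ_inj.mp hcontra)
        simp [hZdef, hne, Matrix.updateRow_ne this]
    rw [Finset.sum_congr rfl (fun i _ => hterm i), Finset.sum_add_distrib,
      Finset.sum_ite_eq' Finset.univ m] at h1
    simp only [Finset.mem_univ, if_true] at h1
    rw [hY0 c, Finset.mul_sum] at h1
    have h2 : ∑ i : Fin t, b i * Y i.succ c =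
        (∑ i : Fin t, h 0 * (a i * Y i.succ c))
        + ∑ i : Fin t, (if i = m then 0 else h i.succ) * Y i.succ c := by
      rw [← Finset.sum_add_distrib]
      exact Finset.sum_congr rfl fun i _ => by rw [hb]; ring
    rw [h2]
    linear_combination h1
  -- case on h m.succ
  rcases eq_or_ne (h m.succ) 0 with hms | hms
  · -- linear relation among the v i
    have hrel : ∑ i : Fin t, b i • Y i.succ = 0 := by
      ext c
      have := hfin c
      rw [hms, zero_mul, add_zero] at this
      simpa [Finset.sum_apply] using this
    have hb0 := hli' b hrel
    have hh00 : h 0 = 0 := by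
      have := hb0 m
      rw [hb] at this
      simp at this
      rcases this with h | h
      · exact h
      · exact absurd h ham
    apply hh0
    ext i
    refine Fin.cases hh00 (fun i => ?_) i
    rcases eq_or_ne i m with rfl | hne
    · exact hms
    · have := hb0 i
      rw [hb] at this
      simp [hne, hh00] at this
      exact this
  · -- Pi.single j 1 ∈ W, contradiction
    apply hj
    have : Pi.single j 1 = (-(h m.succ)⁻¹) • (∑ i : Fin t, b i • Y i.succ) := by
      ext c
      have := hfin c
      have hne := hms
      simp only [Pi.smul_apply, Finset.sum_apply, smul_eq_mul]
      have e : (Pi.single j 1 : Fin (t+1) → K) c = (h m.succ)⁻¹ * (h m.succ * (Pi.single j 1 : Fin (t+1) → K) c) := by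
        rw [← mul_assoc, inv_mul_cancel₀ hne, one_mul]
      linear_combination (h m.succ)⁻¹ * this + e
    rw [this]
    exact Submodule.smul_mem _ _ (Submodule.sum_mem _ fun i _ => Submodule.smul_mem _ _
      (Submodule.subset_span ⟨i, rfl⟩))
end
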